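/- arXiv:1408.6912 — 4 statements merged into one kernel-verified Lean document; each statement's English description precedes it below -/
import Mathlib

section
/- Let f : ℝ^N → ℝ^N, h : ℝ^N → ℝ^M, and K : ℝ^M → ℝ^N be C¹ maps with f(0)=0, h(0)=0, K(0)=0, and define g(x,ξ) := f(x) − ξ·K(h(x)) for ξ ∈ {0,1}. Assume the Jacobian ∂g/∂x(x,ξ) is uniformly bounded in operator norm over all x ∈ ℝ^N and ξ ∈ {0,1}. Fix 0 < p < 1. For an erasure sequence ξ = (ξ_0, ξ_1, …) ∈ {0,1}^ℕ and initial data x_0, e_0, η_0 ∈ ℝ^N define x_{t+1} = f(x_t), the nonlinear observer error e_{t+1} = g(x_t, ξ_t) − g(x_t − e_t, ξ_t), and the linearized error η_{t+1} = (Df(x_t) − ξ_t·D(K∘h)(x_t)) η_t. If there exist L < ∞ and 0 < β < 1 such that for all x_0, e_0 ∈ ℝ^N and all t ≥ 0 one has E_{ξ_0^t}[‖e_{t+1}‖²] ≤ L β^t ‖e_0‖², then for all x_0, η_0 ∈ ℝ^N and all t ≥ 0 one also has E_{ξ_0^t}[‖η_{t+1}‖²] ≤ L β^t ‖η_0‖²,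 i.e. MSE stability of the nonlinear error dynamics implies MSE stability of the linearized error dynamics. -/
open Matrix

noncomputable section

abbrev Euc (n : ℕ) := EuclideanSpace ℝ (Fin n)

/-- Expectation over i.i.d. Bernoulli(p) erasure prefixes (ξ_0,…,ξ_t):
`E_{ξ_0^t}[G] = ∑_{s ∈ {0,1}^{t+1}} p^{#{i : s_i = 1}} (1−p)^{#{i : s_i = 0}} G(s)`. -/
def erasureExp (p : ℝ) (t : ℕ) (G : (ℕ → Bool) → ℝ) : ℝ :=
  ∑ s : Fin (t + 1) → Bool,
    (∏ i, if s i then p else 1 - p) *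
      G (fun n => if h : n < t + 1 then s ⟨n, h⟩ else false)

variable {N M : ℕ}

/-- `g(x, ξ) := f(x) − ξ·K(h(x))`. -/
def gmap (f : Euc N → Euc N) (h : Euc N → Euc M) (K : Euc M → Euc N)
    (x : Euc N) (ξ : Bool) : Euc N :=
  f x - (if ξ then (1 : ℝ) else 0) • K (h x)

/-- Nonlinear observer error dynamics `e_{t+1} = g(x_t, ξ_t) − g(x_t − e_t, ξ_t)`
along `x_{t+1} = f(x_t)`, `x_0 = x0`, `e_0 = e0`. -/
def errSeq (f : Euc N → Euc N) (h : Euc N → Euc M) (K : Euc M → Euc N)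
    (x0 e0 : Euc N) (ξ : ℕ → Bool) : ℕ → Euc N
  | 0 => e0
  | t + 1 =>
      gmap f h K (f^[t] x0) (ξ t) -
        gmap f h K (f^[t] x0 - errSeq f h K x0 e0 ξ t) (ξ t)

/-- Linearized error dynamics `η_{t+1} = (Df(x_t) − ξ_t·D(K∘h)(x_t)) η_t`
along `x_{t+1} = f(x_t)`. -/
def etaSeq (f : Euc N → Euc N) (h : Euc N → Euc M) (K : Euc M → Euc N)
    (x0 η0 : Euc N) (ξ : ℕ → Bool) : ℕ → Euc N
  | 0 => η0
  | t + 1 =>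
      fderiv ℝ f (f^[t] x0) (etaSeq f h K x0 η0 ξ t) -
        (if ξ t then (1 : ℝ) else 0) •
          fderiv ℝ (K ∘ h) (f^[t] x0) (etaSeq f h K x0 η0 ξ t)

open Filter Topology

lemma gmap_differentiable (f : Euc N → Euc N) (h : Euc N → Euc M) (K : Euc M → Euc N)
    (hf : ContDiff ℝ 1 f) (hh : ContDiff ℝ 1 h) (hK : ContDiff ℝ 1 K) (ξ : Bool) :
    Differentiable ℝ (fun y => gmap f h K y ξ) := by
  have h1 : Differentiable ℝ f := hf.differentiable one_ne_zero
  have h2 : Differentiable ℝ (K ∘ h) := (hK.comp hh).differentiable one_ne_zero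
  exact h1.sub (h2.fun_const_smul _)

lemma fderiv_gmap (f : Euc N → Euc N) (h : Euc N → Euc M) (K : Euc M → Euc N)
    (hf : ContDiff ℝ 1 f) (hh : ContDiff ℝ 1 h) (hK : ContDiff ℝ 1 K)
    (x : Euc N) (ξ : Bool) :
    fderiv ℝ (fun y => gmap f h K y ξ) x =
      fderiv ℝ f x - (if ξ then (1 : ℝ) else 0) • fderiv ℝ (K ∘ h) x := by
  have h1 : DifferentiableAt ℝ f x := (hf.differentiable one_ne_zero) x
  have h2 : DifferentiableAt ℝ (K ∘ h) x := ((hK.comp hh).differentiable one_ne_zero) x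
  have : (fun y => gmap f h K y ξ) =
      fun y => f y - (if ξ then (1:ℝ) else 0) • (K ∘ h) y := rfl
  rw [this, fderiv_fun_sub h1 (h2.fun_const_smul _), fderiv_fun_const_smul h2]

lemma errSeq_zero (f : Euc N → Euc N) (h : Euc N → Euc M) (K : Euc M → Euc N)
    (x0 : Euc N) (ξ : ℕ → Bool) : ∀ tt, errSeq f h K x0 0 ξ tt = 0
  | 0 => rfl
  | t + 1 => by simp [errSeq, errSeq_zero f h K x0 ξ t]

lemma errSeq_hasFDerivAt (f : Euc N → Euc N) (h : Euc N → Euc M) (K : Euc M → Euc N)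
    (hf : ContDiff ℝ 1 f) (hh : ContDiff ℝ 1 h) (hK : ContDiff ℝ 1 K)
    (x0 : Euc N) (ξ : ℕ → Bool) (tt : ℕ) :
    ∃ D : Euc N →L[ℝ] Euc N,
      HasFDerivAt (fun e0 => errSeq f h K x0 e0 ξ tt) D 0 ∧
      ∀ η0, D η0 = etaSeq f h K x0 η0 ξ tt := by
  induction tt with
  | zero => exact ⟨ContinuousLinearMap.id ℝ _, hasFDerivAt_id 0, fun η0 => rfl⟩
  | succ n ih =>
    obtain ⟨D, hD, hDeq⟩ := ih
    set xt := f^[n] x0 with hxt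
    set A := fderiv ℝ (fun y => gmap f h K y (ξ n)) xt with hA
    have hgdiff := gmap_differentiable f h K hf hh hK (ξ n)
    have hAder : HasFDerivAt (fun y => gmap f h K y (ξ n)) A xt := (hgdiff xt).hasFDerivAt
    have hinner : HasFDerivAt (fun e0 => xt - errSeq f h K x0 e0 ξ n) (-D) 0 := by
      simpa using (hasFDerivAt_const xt (0 : Euc N)).fun_sub hD
    have h0 : (fun e0 => xt - errSeq f h K x0 e0 ξ n) 0 = xt := by
      simp [errSeq_zero]
    rw [← h0] at hAder
    have hcomp := hAder.comp (0 : Euc N) hinner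
    refine ⟨A.comp D, ?_, ?_⟩
    · have hsub : HasFDerivAt (fun e0 : Euc N =>
          gmap f h K xt (ξ n) -
            ((fun y => gmap f h K y (ξ n)) ∘ fun e0 => xt - errSeq f h K x0 e0 ξ n) e0)
          (0 - A.comp (-D)) 0 :=
        (hasFDerivAt_const (gmap f h K xt (ξ n)) (0 : Euc N)).sub hcomp
      have heq : (fun e0 : Euc N =>
          gmap f h K xt (ξ n) -
            ((fun y => gmap f h K y (ξ n)) ∘ fun e0 => xt - errSeq f h K x0 e0 ξ n) e0) =
          fun e0 => errSeq f h K x0 e0 ξ (n + 1) := rfl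
      rw [heq] at hsub
      convert hsub using 1
      ext v
      simp
    · intro η0
      have hg := fderiv_gmap f h K hf hh hK xt (ξ n)
      rw [← hA] at hg
      simp [ContinuousLinearMap.comp_apply, hg, hDeq, etaSeq, hxt]
      split <;> simp

/-- MSE stability of the nonlinear observer error dynamics implies
MSE stability of the linearized error dynamics (with the same constants). -/
theorem mse_stability_of_error_implies_mse_stability_of_linearized
    (f : Euc N → Euc N) (h : Euc N → Euc M) (K : Euc M → Euc N)
    (hf : ContDiff ℝ 1 f) (hh : ContDiff ℝ 1 h) (hK : ContDiff ℝ 1 K)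
    (hf0 : f 0 = 0) (hh0 : h 0 = 0) (hK0 : K 0 = 0)
    (hJacBound : ∃ B : ℝ, ∀ (x : Euc N) (ξ : Bool),
      ‖fderiv ℝ (fun y => gmap f h K y ξ) x‖ ≤ B)
    (p : ℝ) (hp0 : 0 < p) (hp1 : p < 1)
    (L β : ℝ) (hβ0 : 0 < β) (hβ1 : β < 1)
    (hMSE : ∀ (x0 e0 : Euc N) (t : ℕ),
      erasureExp p t (fun ξ => ‖errSeq f h K x0 e0 ξ (t + 1)‖ ^ 2) ≤
        L * β ^ t * ‖e0‖ ^ 2) :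
    ∀ (x0 η0 : Euc N) (t : ℕ),
      erasureExp p t (fun ξ => ‖etaSeq f h K x0 η0 ξ (t + 1)‖ ^ 2) ≤
        L * β ^ t * ‖η0‖ ^ 2 := by
  intro x0 η0 t
  classical
  set ξof : (Fin (t + 1) → Bool) → (ℕ → Bool) :=
    fun s n => if hn : n < t + 1 then s ⟨n, hn⟩ else false with hξof
  -- The key limit
  have main : Tendsto (fun r : ℝ =>
      erasureExp p t (fun ξ => ‖errSeq f h K x0 (r • η0) ξ (t + 1)‖ ^ 2) / r ^ 2)
      (𝓝[≠] (0 : ℝ))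
      (𝓝 (erasureExp p t (fun ξ => ‖etaSeq f h K x0 η0 ξ (t + 1)‖ ^ 2))) := by
    have hfun : ∀ r : ℝ,
        erasureExp p t (fun ξ => ‖errSeq f h K x0 (r • η0) ξ (t + 1)‖ ^ 2) / r ^ 2
        = ∑ s : Fin (t + 1) → Bool,
            (∏ i, if s i then p else 1 - p) *
              (‖errSeq f h K x0 (r • η0) (ξof s) (t + 1)‖ ^ 2 / r ^ 2) := by
      intro r
      unfold erasureExp
      rw [Finset.sum_div]
      exact Finset.sum_congr rfl (fun s _ => by ring)
    have hlim : Tendsto (fun r : ℝ => ∑ s : Fin (t + 1) → Bool,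
        (∏ i, if s i then p else 1 - p) *
          (‖errSeq f h K x0 (r • η0) (ξof s) (t + 1)‖ ^ 2 / r ^ 2))
        (𝓝[≠] (0 : ℝ))
        (𝓝 (∑ s : Fin (t + 1) → Bool,
          (∏ i, if s i then p else 1 - p) *
            ‖etaSeq f h K x0 η0 (ξof s) (t + 1)‖ ^ 2)) := by
      apply tendsto_finset_sum
      intro s _
      apply Tendsto.const_mul
      obtain ⟨D, hD, hDeq⟩ := errSeq_hasFDerivAt f h K hf hh hK x0 (ξof s) (t + 1)
      set ψ : ℝ → Euc N := fun r => errSeq f h K x0 (r • η0) (ξof s) (t + 1) with hψdef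
      have hline : HasDerivAt (fun r : ℝ => r • η0) η0 0 := by
        simpa using (hasDerivAt_id (0 : ℝ)).smul_const η0
      have hD0 : HasFDerivAt (fun e0 => errSeq f h K x0 e0 (ξof s) (t + 1)) D
          ((0 : ℝ) • η0) := by simpa using hD
      have hψ : HasDerivAt ψ (D η0) 0 := by
        have := hD0.comp_hasDerivAt 0 hline
        exact this
      have hslope := hasDerivAt_iff_tendsto_slope.mp hψ
      have hnorm : Tendsto (fun r : ℝ => ‖slope ψ 0 r‖ ^ 2) (𝓝[≠] (0 : ℝ))
          (𝓝 (‖D η0‖ ^ 2)) :=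
        ((continuous_norm.pow 2).tendsto _).comp hslope
      have hψ0 : ψ 0 = 0 := by
        simp [hψdef, errSeq_zero]
      have hEq : ∀ r ∈ ({(0 : ℝ)}ᶜ : Set ℝ), ‖slope ψ 0 r‖ ^ 2 = ‖ψ r‖ ^ 2 / r ^ 2 := by
        intro r hr
        have h1 : slope ψ 0 r = r⁻¹ • ψ r := by simp [slope, hψ0]
        rw [h1, norm_smul, mul_pow, norm_inv, Real.norm_eq_abs, inv_pow, sq_abs,
          inv_mul_eq_div]
      have := hnorm.congr' (eventually_of_mem self_mem_nhdsWithin hEq)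
      rw [hDeq] at this
      exact this
    rw [show (fun r : ℝ =>
        erasureExp p t (fun ξ => ‖errSeq f h K x0 (r • η0) ξ (t + 1)‖ ^ 2) / r ^ 2)
        = fun r : ℝ => ∑ s : Fin (t + 1) → Bool,
            (∏ i, if s i then p else 1 - p) *
              (‖errSeq f h K x0 (r • η0) (ξof s) (t + 1)‖ ^ 2 / r ^ 2) from
        funext hfun]
    exact hlim
  refine le_of_tendsto main (eventually_of_mem self_mem_nhdsWithin ?_)
  intro r hr
  have hr0 : r ≠ 0 := hr
  have hr2 : (0 : ℝ) < r ^ 2 := by positivity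
  rw [div_le_iff₀ hr2]
  calc erasureExp p t (fun ξ => ‖errSeq f h K x0 (r • η0) ξ (t + 1)‖ ^ 2)
      ≤ L * β ^ t * ‖r • η0‖ ^ 2 := hMSE x0 (r • η0) t
    _ = L * β ^ t * ‖η0‖ ^ 2 * r ^ 2 := by
        rw [norm_smul, Real.norm_eq_abs, mul_pow, sq_abs]; ring

end
end

section
/- Let Q be an N×N real positive definite matrix, let A be an invertible N×N real matrix, let C be an M×N real matrix of rank M with M ≤ N, and let 0 ≤ p < 1. Then the matrix A Q Aᵀ − p·A Q Cᵀ (C Q Cᵀ)^{-1} C Q Aᵀ is positive definite and its determinant equals (1−p)^M · (det A)² · det Q. -/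
open Matrix

/-- Conjugation of a positive definite real matrix by a matrix with injective
transpose-`mulVec` is positive definite. -/
lemma posDef_mul_mul_transpose_aux {m n : Type*} [Fintype m] [Fintype n]
    {Q : Matrix n n ℝ} (hQ : Q.PosDef) (B : Matrix m n ℝ)
    (hB : Function.Injective (Bᵀ.mulVec)) : (B * Q * Bᵀ).PosDef := by
  rw [posDef_iff_dotProduct_mulVec]
  constructor
  · have hQt : Qᵀ = Q := by
      rw [← conjTranspose_eq_transpose_of_trivial, hQ.1.eq]
    have h : (B * Q * Bᵀ)ᴴ = B * Q * Bᵀ := by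
      simp only [conjTranspose_eq_transpose_of_trivial, transpose_mul,
        transpose_transpose, hQt, Matrix.mul_assoc]
    exact h
  · intro x hx
    have hxC : Bᵀ *ᵥ x ≠ 0 := by
      intro h
      exact hx (hB (by simpa using h))
    have key : star x ⬝ᵥ ((B * Q * Bᵀ) *ᵥ x) = star (Bᵀ *ᵥ x) ⬝ᵥ (Q *ᵥ (Bᵀ *ᵥ x)) := by
      rw [← mulVec_mulVec, ← mulVec_mulVec, dotProduct_mulVec, star_trivial,
        ← mulVec_transpose, star_trivial]
    rw [key]
    exact (posDef_iff_dotProduct_mulVec.mp hQ).2 hxC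

/-- Nonnegative scalar multiple of a real positive semidefinite matrix. -/
lemma posSemidef_smul_aux {n : Type*} [Fintype n] {Q : Matrix n n ℝ}
    (hQ : Q.PosSemidef) {c : ℝ} (hc : 0 ≤ c) : (c • Q).PosSemidef := by
  rw [posSemidef_iff_dotProduct_mulVec]
  constructor
  · have hQt : Qᵀ = Q := by rw [← conjTranspose_eq_transpose_of_trivial, hQ.1.eq]
    have h : (c • Q)ᴴ = c • Q := by simp [hQt]
    exact h
  · intro x
    rw [smul_mulVec, dotProduct_smul]
    exact mul_nonneg hc (by simpa using (posSemidef_iff_dotProduct_mulVec.mp hQ).2 x)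

/-- Positive scalar multiple of a real positive definite matrix. -/
lemma posDef_smul_aux {n : Type*} [Fintype n] {Q : Matrix n n ℝ}
    (hQ : Q.PosDef) {c : ℝ} (hc : 0 < c) : (c • Q).PosDef := by
  rw [posDef_iff_dotProduct_mulVec]
  constructor
  · have hQt : Qᵀ = Q := by rw [← conjTranspose_eq_transpose_of_trivial, hQ.1.eq]
    have h : (c • Q)ᴴ = c • Q := by simp [hQt]
    exact h
  · intro x hx
    rw [smul_mulVec, dotProduct_smul]
    exact mul_pos hc (by simpa using (posDef_iff_dotProduct_mulVec.mp hQ).2 hx)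

/-- For `0 ≤ p < 1`, the matrix
`A Q Aᵀ − p·A Q Cᵀ (C Q Cᵀ)⁻¹ C Q Aᵀ` is positive definite, with determinant
`(1−p)^M (det A)² det Q`. -/
theorem riccati_rhs_posDef_and_det {N M : ℕ}
    (Q A : Matrix (Fin N) (Fin N) ℝ) (C : Matrix (Fin M) (Fin N) ℝ) (p : ℝ)
    (hQ : Q.PosDef) (hA : A.det ≠ 0) (hMN : M ≤ N) (hC : C.rank = M)
    (hp0 : 0 ≤ p) (hp1 : p < 1) :
    (A * Q * Aᵀ - p • (A * Q * Cᵀ * (C * Q * Cᵀ)⁻¹ * (C * Q * Aᵀ))).PosDef ∧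
    (A * Q * Aᵀ - p • (A * Q * Cᵀ * (C * Q * Cᵀ)⁻¹ * (C * Q * Aᵀ))).det =
      (1 - p) ^ M * A.det ^ 2 * Q.det := by
  -- injectivity of `Cᵀ *ᵥ ·`
  have hCT : Function.Injective (Cᵀ.mulVec) := by
    have hrank : Cᵀ.rank = M := by rw [Matrix.rank_transpose, hC]
    rw [← Matrix.coe_mulVecLin]
    rw [← LinearMap.ker_eq_bot]
    have h1 := LinearMap.finrank_range_add_finrank_ker (Cᵀ.mulVecLin)
    rw [Matrix.rank] at hrank
    rw [hrank] at h1
    simp only [Module.finrank_pi, Fintype.card_fin] at h1 ⊢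
    have hker : Module.finrank ℝ (LinearMap.ker Cᵀ.mulVecLin) = 0 := by omega
    exact Submodule.finrank_eq_zero.mp hker
  set K : Matrix (Fin M) (Fin M) ℝ := C * Q * Cᵀ with hKdef
  have hK : K.PosDef := posDef_mul_mul_transpose_aux hQ C hCT
  haveI : Invertible K := hK.isUnit.invertible
  have hKdet : K.det ≠ 0 := hK.det_pos.ne'
  -- the Schur complement is positive semidefinite
  have hSchur : (Q - Q * Cᵀ * K⁻¹ * (C * Q)).PosSemidef := by
    have hblock : (fromBlocks Q (Q * Cᵀ) (C * Q) K).PosSemidef := by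
      have h := hQ.posSemidef.mul_mul_conjTranspose_same (fromRows (1 : Matrix (Fin N) (Fin N) ℝ) C)
      have heq : fromRows (1 : Matrix (Fin N) (Fin N) ℝ) C * Q *
          (fromRows (1 : Matrix (Fin N) (Fin N) ℝ) C)ᴴ
          = fromBlocks Q (Q * Cᵀ) (C * Q) K := by
        rw [fromRows_mul, Matrix.one_mul]
        have : (fromRows (1 : Matrix (Fin N) (Fin N) ℝ) C)ᴴ
            = fromCols (1 : Matrix (Fin N) (Fin N) ℝ) Cᵀ := by
          rw [conjTranspose_eq_transpose_of_trivial, transpose_fromRows, transpose_one]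
        rw [this, fromRows_mul_fromCols]
        simp [hKdef]
      rwa [heq] at h
    have hQt : Qᵀ = Q := by
      rw [← conjTranspose_eq_transpose_of_trivial, hQ.1.eq]
    have hqc : (Q * Cᵀ)ᴴ = C * Q := by
      simp only [conjTranspose_eq_transpose_of_trivial, transpose_mul, transpose_transpose, hQt]
    have h2 := (Matrix.PosDef.fromBlocks₂₂ Q (Q * Cᵀ) hK).mp (by rw [hqc]; exact hblock)
    rwa [hqc] at h2
  -- the inner matrix is positive definite
  set R : Matrix (Fin N) (Fin N) ℝ := Q - p • (Q * Cᵀ * K⁻¹ * (C * Q)) with hRdef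
  have hRsplit : R = (1 - p) • Q + p • (Q - Q * Cᵀ * K⁻¹ * (C * Q)) := by
    rw [hRdef]; module
  have hR : R.PosDef := by
    rw [hRsplit]
    exact (posDef_smul_aux hQ (by linarith)).add_posSemidef (posSemidef_smul_aux hSchur hp0)
  -- the statement matrix is A * R * Aᵀ
  have hfact : A * Q * Aᵀ - p • (A * Q * Cᵀ * K⁻¹ * (C * Q * Aᵀ)) = A * R * Aᵀ := by
    rw [hRdef]
    rw [Matrix.mul_sub, Matrix.sub_mul]
    congr 1
    rw [Matrix.mul_smul, Matrix.smul_mul]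
    congr 1
    simp only [Matrix.mul_assoc]
  rw [hfact]
  have hAT : Function.Injective (Aᵀ.mulVec) :=
    Matrix.mulVec_injective_iff_isUnit.mpr
      ((Matrix.isUnit_iff_isUnit_det Aᵀ).mpr
        (by rw [det_transpose]; exact isUnit_iff_ne_zero.mpr hA))
  refine ⟨posDef_mul_mul_transpose_aux hR A hAT, ?_⟩
  -- determinant computation
  have hRfact : R = Q * (1 - p • (Cᵀ * (K⁻¹ * (C * Q)))) := by
    rw [hRdef, Matrix.mul_sub, Matrix.mul_one, Matrix.mul_smul]
    simp only [Matrix.mul_assoc]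
  have hdetR : R.det = Q.det * (1 - p) ^ M := by
    rw [hRfact, det_mul]
    congr 1
    have h1 : p • (Cᵀ * (K⁻¹ * (C * Q))) = Cᵀ * (p • (K⁻¹ * (C * Q))) := by
      rw [Matrix.mul_smul]
    rw [h1, det_one_sub_mul_comm]
    have h2 : p • (K⁻¹ * (C * Q)) * Cᵀ = p • (1 : Matrix (Fin M) (Fin M) ℝ) := by
      rw [Matrix.smul_mul, Matrix.mul_assoc, Matrix.mul_assoc, ← Matrix.mul_assoc C Q Cᵀ,
        ← hKdef, Matrix.nonsing_inv_mul K (isUnit_iff_ne_zero.mpr hKdet)]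
    rw [h2]
    have h3 : (1 : Matrix (Fin M) (Fin M) ℝ) - p • (1 : Matrix (Fin M) (Fin M) ℝ)
        = (1 - p) • (1 : Matrix (Fin M) (Fin M) ℝ) := by
      rw [sub_smul, one_smul]
    rw [h3, det_smul, det_one, Fintype.card_fin, mul_one]
  rw [det_mul, det_mul, det_transpose, hdetR]
  ring
end

section
/- Let Q be an N×N real positive definite matrix, let A be an N×N real matrix, let C be an M×N real matrix of rank M with M ≤ N, and let 0 < p ≤ 1. Then for every N×M real matrix K̃: p·(A − K̃C) Q (A − K̃C)ᵀ + (1−p)·A Q Aᵀ ≥ A Q Aᵀ − p·A Q Cᵀ (C Q Cᵀ)^{-1} C Q Aᵀ in the Loewner order, with equality when K̃ = A Q Cᵀ (C Q Cᵀ)^{-1}. In particular, K̃* = A Q Cᵀ (C Q Cᵀ)^{-1} minimizes the trace of the left-hand side over all K̃. -/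
open Matrix

private lemma psd_smul_aux {n : ℕ} {M : Matrix (Fin n) (Fin n) ℝ} {c : ℝ}
    (hc : 0 ≤ c) (hM : M.PosSemidef) : (c • M).PosSemidef := by
  refine PosSemidef.of_dotProduct_mulVec_nonneg ?_ fun x => ?_
  · have hMt : Mᵀ = M := (conjTranspose_eq_transpose_of_trivial M).symm.trans hM.1.eq
    simp [Matrix.IsHermitian, conjTranspose_smul, hMt]
  · rw [smul_mulVec, dotProduct_smul, smul_eq_mul]
    exact mul_nonneg hc (hM.dotProduct_mulVec_nonneg x)

private lemma psd_trace_nonneg {n : ℕ} {M : Matrix (Fin n) (Fin n) ℝ}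
    (hM : M.PosSemidef) : 0 ≤ M.trace := by
  rw [Matrix.trace]
  refine Finset.sum_nonneg fun i _ => ?_
  have := hM.dotProduct_mulVec_nonneg (Pi.single i 1)
  simpa [Matrix.mulVec_single, dotProduct, Pi.single_apply] using this

/-- For every gain `K̃`,
`p·(A−K̃C) Q (A−K̃C)ᵀ + (1−p)·A Q Aᵀ ≥ A Q Aᵀ − p·A Q Cᵀ(C Q Cᵀ)⁻¹ C Q Aᵀ`,
with equality at `K̃* = A Q Cᵀ (C Q Cᵀ)⁻¹`; in particular `K̃*` minimizes the trace
of the left-hand side. -/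
theorem optimal_gain_loewner {N M : ℕ}
    (Q A : Matrix (Fin N) (Fin N) ℝ) (C : Matrix (Fin M) (Fin N) ℝ) (p : ℝ)
    (hQ : Q.PosDef) (hMN : M ≤ N) (hC : C.rank = M)
    (hp0 : 0 < p) (hp1 : p ≤ 1) :
    (∀ Kt : Matrix (Fin N) (Fin M) ℝ,
      (p • ((A - Kt * C) * Q * (A - Kt * C)ᵀ) + (1 - p) • (A * Q * Aᵀ) -
        (A * Q * Aᵀ - p • (A * Q * Cᵀ * (C * Q * Cᵀ)⁻¹ * (C * Q * Aᵀ)))).PosSemidef) ∧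
    (p • ((A - A * Q * Cᵀ * (C * Q * Cᵀ)⁻¹ * C) * Q * (A - A * Q * Cᵀ * (C * Q * Cᵀ)⁻¹ * C)ᵀ) +
        (1 - p) • (A * Q * Aᵀ) =
      A * Q * Aᵀ - p • (A * Q * Cᵀ * (C * Q * Cᵀ)⁻¹ * (C * Q * Aᵀ))) ∧
    (∀ Kt : Matrix (Fin N) (Fin M) ℝ,
      (p • ((A - A * Q * Cᵀ * (C * Q * Cᵀ)⁻¹ * C) * Q *
            (A - A * Q * Cᵀ * (C * Q * Cᵀ)⁻¹ * C)ᵀ) +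
          (1 - p) • (A * Q * Aᵀ)).trace ≤
        (p • ((A - Kt * C) * Q * (A - Kt * C)ᵀ) + (1 - p) • (A * Q * Aᵀ)).trace) := by
  -- abbreviations
  set S : Matrix (Fin M) (Fin M) ℝ := C * Q * Cᵀ with hSdef
  have hQt : Qᵀ = Q := (conjTranspose_eq_transpose_of_trivial Q).symm.trans hQ.1
  -- rows of C are linearly independent
  have hli : LinearIndependent ℝ (fun i => C i) := by
    apply linearIndependent_iff_card_eq_finrank_span.mpr
    have h := rank_eq_finrank_span_row C
    rw [hC] at h
    rw [Set.finrank, Fintype.card_fin]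
    exact h
  have hinj : Function.Injective C.vecMul := Matrix.vecMul_injective_iff.mpr hli
  -- S is positive definite
  have hS : S.PosDef := by
    refine PosDef.of_dotProduct_mulVec_pos ?_ ?_
    · have := (hQ.posSemidef.mul_mul_conjTranspose_same C)
      rw [conjTranspose_eq_transpose_of_trivial] at this
      exact this.1
    · intro x hx
      have hx' : Cᵀ *ᵥ x ≠ 0 := by
        rw [mulVec_transpose]
        intro h
        exact hx (hinj (by simpa using h))
      have := hQ.dotProduct_mulVec_pos hx'
      simpa [hSdef, ← Matrix.mulVec_mulVec, Matrix.dotProduct_mulVec,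
        Matrix.mulVec_transpose] using this
  have hdet : IsUnit S.det := hS.det_pos.ne'.isUnit
  have hSt : Sᵀ = S := by
    rw [hSdef, transpose_mul, transpose_mul, transpose_transpose, hQt, Matrix.mul_assoc]
  have hSit : (S⁻¹)ᵀ = S⁻¹ := by rw [transpose_nonsing_inv, hSt]
  have hSiS : S⁻¹ * S = 1 := nonsing_inv_mul _ hdet
  have hSSi : S * S⁻¹ = 1 := mul_nonsing_inv _ hdet
  set G : Matrix (Fin N) (Fin M) ℝ := A * Q * Cᵀ * S⁻¹ with hGdef
  have hGt : Gᵀ = S⁻¹ * (C * Q * Aᵀ) := by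
    rw [hGdef, transpose_mul, transpose_mul, transpose_mul, transpose_transpose, hQt, hSit]
    simp only [Matrix.mul_assoc]
  have hGS : G * S = A * Q * Cᵀ := by
    rw [hGdef, Matrix.mul_assoc, hSiS, Matrix.mul_one]
  have hSGt : S * Gᵀ = C * Q * Aᵀ := by
    rw [hGt, ← Matrix.mul_assoc, hSSi, Matrix.one_mul]
  -- the key algebraic identity
  have key : ∀ Kt : Matrix (Fin N) (Fin M) ℝ,
      (A - Kt * C) * Q * (A - Kt * C)ᵀ - A * Q * Aᵀ
        + A * Q * Cᵀ * S⁻¹ * (C * Q * Aᵀ)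
      = (Kt - G) * S * (Kt - G)ᵀ := by
    intro Kt
    have e1 : (A - Kt * C) * Q * (A - Kt * C)ᵀ
        = A * Q * Aᵀ - A * Q * (Cᵀ * Ktᵀ) - Kt * C * Q * Aᵀ + Kt * C * Q * (Cᵀ * Ktᵀ) := by
      rw [transpose_sub, transpose_mul]
      simp only [Matrix.sub_mul, Matrix.mul_sub]
      abel
    have e2 : (Kt - G) * S * (Kt - G)ᵀ
        = Kt * S * Ktᵀ - Kt * (S * Gᵀ) - G * S * Ktᵀ + G * (S * Gᵀ) := by
      rw [transpose_sub]
      simp only [Matrix.sub_mul, Matrix.mul_sub, Matrix.mul_assoc]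
      abel
    rw [e1, e2, hSGt, hGS]
    have h3 : A * Q * Cᵀ * S⁻¹ * (C * Q * Aᵀ) = G * (C * Q * Aᵀ) := by
      rw [hGdef]
    have h4 : G * (C * Q * Aᵀ) = G * (S * Gᵀ) := by rw [hSGt]
    have h5 : Kt * C * Q * (Cᵀ * Ktᵀ) = Kt * S * Ktᵀ := by
      rw [hSdef]
      simp only [Matrix.mul_assoc]
    have h6 : A * Q * (Cᵀ * Ktᵀ) = A * Q * Cᵀ * Ktᵀ := by
      simp only [Matrix.mul_assoc]
    have h7 : Kt * C * Q * Aᵀ = Kt * (C * Q * Aᵀ) := by simp only [Matrix.mul_assoc]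
    rw [h3, h4, hSGt, h5, h6, h7]
    abel
  -- reformulation with the scalars
  have reform : ∀ Kt : Matrix (Fin N) (Fin M) ℝ,
      p • ((A - Kt * C) * Q * (A - Kt * C)ᵀ) + (1 - p) • (A * Q * Aᵀ) -
        (A * Q * Aᵀ - p • (A * Q * Cᵀ * S⁻¹ * (C * Q * Aᵀ)))
      = p • ((Kt - G) * S * (Kt - G)ᵀ) := by
    intro Kt
    rw [← key Kt]
    module
  have hPSD : ∀ Kt : Matrix (Fin N) (Fin M) ℝ,
      ((Kt - G) * S * (Kt - G)ᵀ).PosSemidef := by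
    intro Kt
    have := hS.posSemidef.mul_mul_conjTranspose_same (Kt - G)
    rwa [conjTranspose_eq_transpose_of_trivial] at this
  have hEQ : p • ((A - A * Q * Cᵀ * (C * Q * Cᵀ)⁻¹ * C) * Q *
        (A - A * Q * Cᵀ * (C * Q * Cᵀ)⁻¹ * C)ᵀ) + (1 - p) • (A * Q * Aᵀ)
      = A * Q * Aᵀ - p • (A * Q * Cᵀ * (C * Q * Cᵀ)⁻¹ * (C * Q * Aᵀ)) := by
    have h0 := reform G
    simp only [sub_self, transpose_zero, Matrix.zero_mul, Matrix.mul_zero, smul_zero,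
      sub_eq_zero] at h0
    exact h0
  refine ⟨fun Kt => ?_, hEQ, fun Kt => ?_⟩
  · rw [reform Kt]
    exact psd_smul_aux hp0.le (hPSD Kt)
  · have h1 : (p • ((A - Kt * C) * Q * (A - Kt * C)ᵀ) + (1 - p) • (A * Q * Aᵀ))
        = (A * Q * Aᵀ - p • (A * Q * Cᵀ * (C * Q * Cᵀ)⁻¹ * (C * Q * Aᵀ)))
          + p • ((Kt - G) * S * (Kt - G)ᵀ) := by
      rw [← reform Kt]; module
    rw [hEQ, h1, Matrix.trace_add]
    have := psd_trace_nonneg (psd_smul_aux hp0.le (hPSD Kt))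
    linarith
end

section
/- Let X ⊆ ℝ^N be a compact set, let f : X → X be a measurable map preserving an ergodic Borel probability measure μ on X, let A : X → GL(N,ℝ) be measurable with x ↦ log|det A(x)| μ-integrable, and let M ≥ 1, 0 < p < 1. Suppose there exists a map Q : X → Sym(N,ℝ) taking positive definite values with d_1 ≤ det Q(x) ≤ d_2 for all x ∈ X and some constants 0 < d_1 ≤ d_2, such that (1−p)^M · (det A(x))² · det Q(x) < det Q(f(x)) for all x ∈ X. Then M·log(1−p) + 2·∫_X log|det A(x)| dμ(x) ≤ 0; equivalently, (1−p)^M · exp(2·∫_X log|det A(x)| dμ(x)) ≤ 1. -/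
open Matrix MeasureTheory

noncomputable section

/-- **ergodic limitation.** On a compact `X ⊆ ℝ^N`, if `f` preserves an ergodic
probability measure `μ`, `log|det A|` is integrable, and a positive definite `Q` with uniformly
bounded determinant satisfies the per-step inequality
`(1−p)^M (det A(x))² det Q(x) < det Q(f(x))`, then
`M·log(1−p) + 2·∫ log|det A| dμ ≤ 0`; equivalently
`(1−p)^M · exp(2·∫ log|det A| dμ) ≤ 1`. -/
theorem ergodic_mse_limitation {N : ℕ} (M : ℕ) (hM : 1 ≤ M)
    (X : Set (Euc N)) (hX : IsCompact X)
    (f : X → X) (μ : Measure X) [IsProbabilityMeasure μ] (hf : Ergodic f μ)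
    (A : X → Matrix (Fin N) (Fin N) ℝ)
    (hAmeas : ∀ i j, Measurable fun x : X => A x i j)
    (hA : ∀ x : X, (A x).det ≠ 0)
    (hInt : Integrable (fun x : X => Real.log |(A x).det|) μ)
    (p : ℝ) (hp0 : 0 < p) (hp1 : p < 1)
    (Q : X → Matrix (Fin N) (Fin N) ℝ)
    (hQsymm : ∀ x : X, (Q x).IsSymm) (hQpos : ∀ x : X, (Q x).PosDef)
    (d₁ d₂ : ℝ) (hd₁ : 0 < d₁) (hd₁₂ : d₁ ≤ d₂)
    (hdet : ∀ x : X, d₁ ≤ (Q x).det ∧ (Q x).det ≤ d₂)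
    (hstep : ∀ x : X, (1 - p) ^ M * (A x).det ^ 2 * (Q x).det < (Q (f x)).det) :
    (M : ℝ) * Real.log (1 - p) + 2 * ∫ x, Real.log |(A x).det| ∂μ ≤ 0 ∧
    (1 - p) ^ M * Real.exp (2 * ∫ x, Real.log |(A x).det| ∂μ) ≤ 1 := by
  have h1p : (0:ℝ) < 1 - p := by linarith
  set g : X → ℝ := fun x => Real.log |(A x).det| with hg
  set c : ℝ := (M : ℝ) * Real.log (1 - p) with hc
  set I : ℝ := ∫ x, g x ∂μ with hI
  have hQd : ∀ x : X, 0 < (Q x).det := fun x => lt_of_lt_of_le hd₁ (hdet x).1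
  -- log form of the per-step inequality
  have hlog : ∀ x : X, c + 2 * g x + Real.log ((Q x).det) ≤ Real.log ((Q (f x)).det) := by
    intro x
    have hA2 : (0:ℝ) < (A x).det ^ 2 := by
      have := hA x; positivity
    have hpos : 0 < (1 - p) ^ M * (A x).det ^ 2 * (Q x).det := by
      have := hQd x; positivity
    have hle : Real.log ((1 - p) ^ M * (A x).det ^ 2 * (Q x).det) ≤
        Real.log ((Q (f x)).det) := Real.log_le_log hpos (le_of_lt (hstep x))
    have hexp : Real.log ((1 - p) ^ M * (A x).det ^ 2 * (Q x).det)
        = c + 2 * g x + Real.log ((Q x).det) := by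
      rw [Real.log_mul (by positivity) (ne_of_gt (hQd x)),
        Real.log_mul (by positivity) (ne_of_gt hA2),
        Real.log_pow, Real.log_pow]
      have : Real.log ((A x).det) = g x := by
        rw [hg]; exact (Real.log_abs _).symm
      rw [this]; push_cast; ring
    linarith [hexp ▸ hle]
  -- telescoping the per-step inequality along orbits
  have key : ∀ (n : ℕ) (x : X), (n : ℝ) * c + 2 * birkhoffSum f g n x
      ≤ Real.log ((Q (f^[n] x)).det) - Real.log ((Q x).det) := by
    intro n
    induction n with
    | zero => intro x; simp
    | succ n ih =>
      intro x
      have h1 := ih x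
      have h2 := hlog (f^[n] x)
      rw [birkhoffSum_succ]
      rw [Function.iterate_succ_apply']
      push_cast
      linarith
  -- uniform bound on Birkhoff sums
  have hbound : ∀ (n : ℕ) (x : X),
      birkhoffSum f g n x ≤ (Real.log d₂ - Real.log d₁ - (n : ℝ) * c) / 2 := by
    intro n x
    have h1 := key n x
    have h2 : Real.log ((Q (f^[n] x)).det) ≤ Real.log d₂ :=
      Real.log_le_log (hQd _) (hdet _).2
    have h3 : Real.log d₁ ≤ Real.log ((Q x).det) :=
      Real.log_le_log hd₁ (hdet x).1
    linarith
  have hmp : ∀ k : ℕ, MeasurePreserving (f^[k]) μ μ :=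
    fun k => hf.toMeasurePreserving.iterate k
  have hIntk : ∀ k : ℕ, Integrable (fun x => g (f^[k] x)) μ := by
    intro k
    have h : Integrable (g ∘ f^[k]) μ :=
      Integrable.comp_aemeasurable (by rw [(hmp k).map_eq]; exact hInt)
        (hmp k).measurable.aemeasurable
    exact h
  have hIk : ∀ k : ℕ, (∫ x, g (f^[k] x) ∂μ) = I := by
    intro k
    have := integral_map (μ := μ) (hmp k).measurable.aemeasurable
      (show AEStronglyMeasurable g (Measure.map (f^[k]) μ) by
        rw [(hmp k).map_eq]; exact hInt.aestronglyMeasurable)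
    rw [(hmp k).map_eq] at this
    rw [← this, hI]
  have hIntB : ∀ n : ℕ, Integrable (fun x => birkhoffSum f g n x) μ := by
    intro n
    simp only [birkhoffSum]
    exact integrable_finset_sum _ (fun k _ => hIntk k)
  have hIB : ∀ n : ℕ, (∫ x, birkhoffSum f g n x ∂μ) = (n : ℝ) * I := by
    intro n
    simp only [birkhoffSum]
    rw [integral_finset_sum _ (fun k _ => hIntk k)]
    simp [hIk]
  -- integrate the uniform bound
  have hmain : ∀ n : ℕ, (n : ℝ) * (c + 2 * I) ≤ Real.log d₂ - Real.log d₁ := by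
    intro n
    have hmono : (∫ x, birkhoffSum f g n x ∂μ)
        ≤ ∫ _x, (Real.log d₂ - Real.log d₁ - (n : ℝ) * c) / 2 ∂μ :=
      integral_mono (hIntB n) (integrable_const _) (hbound n)
    rw [hIB n, integral_const] at hmono
    simp only [measure_univ, ENNReal.toReal_one, probReal_univ, one_smul] at hmono
    linarith
  have hD : (0:ℝ) ≤ Real.log d₂ - Real.log d₁ := by
    have := Real.log_le_log hd₁ hd₁₂; linarith
  have hfirst : c + 2 * I ≤ 0 := by
    by_contra h
    push_neg at h
    obtain ⟨n, hn⟩ := exists_nat_gt ((Real.log d₂ - Real.log d₁) / (c + 2 * I))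
    have := hmain n
    rw [div_lt_iff₀ h] at hn
    linarith
  refine ⟨hfirst, ?_⟩
  have hrw : (1 - p) ^ M * Real.exp (2 * I) = Real.exp (c + 2 * I) := by
    rw [Real.exp_add, hc, Real.exp_nat_mul, Real.exp_log h1p]
  rw [hrw]
  exact Real.exp_le_one_iff.mpr hfirst

end
end
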